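/- For real numbers 0 < q < p ≤ 1, the (p,q)-binomial expansion holds: ∏_{s=0}^{n−1}(p^s x + q^s y) = ∑_{k=0}^{n} [n choose k]_{p,q} p^{(n−k)(n−k−1)/2} q^{k(k−1)/2} x^{n−k} y^k for all real x, y, where [n choose k]_{p,q} = [n]_{p,q}!/([k]_{p,q}! [n−k]_{p,q}!) with [j]_{p,q}! = ∏_{i=1}^{j}[i]_{p,q}. -/

import Mathlib

open Finset

noncomputable def pqInt (p q : ℝ) (n : ℕ) : ℝ := (p ^ n - q ^ n) / (p - q)

noncomputable def pqFact (p q : ℝ) (n : ℕ) : ℝ := ∏ i ∈ Finset.range n, pqInt p q (i + 1)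

noncomputable def pqChoose (p q : ℝ) (n k : ℕ) : ℝ :=
  pqFact p q n / (pqFact p q k * pqFact p q (n - k))

noncomputable def Cop (p q : ℝ) (n m α β : ℕ) (b : ℝ) (f : ℝ → ℝ) (x : ℝ) : ℝ :=
  (1 / p ^ (n * (n - 1) / 2)) *
    ∑ k ∈ Finset.range (n + m + 1),
      pqChoose p q (n + m) k * p ^ (k * (k - 1) / 2) * (x / b) ^ k *
        (∏ s ∈ Finset.range (n + m - k), (p ^ s - q ^ s * (x / b))) *
        f ((p ^ ((n : ℤ) - (k : ℤ)) * pqInt p q k + (α : ℝ)) / (pqInt p q n + (β : ℝ)) * b)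

variable {p q : ℝ}

lemma pqInt_pos (hq : 0 < q) (hqp : q < p) (n : ℕ) : 0 < pqInt p q (n + 1) := by
  unfold pqInt
  apply div_pos _ (sub_pos.2 hqp)
  have : q ^ (n + 1) < p ^ (n + 1) := pow_lt_pow_left₀ hqp hq.le (Nat.succ_ne_zero n)
  linarith
  
lemma pqFact_pos (hq : 0 < q) (hqp : q < p) (n : ℕ) : 0 < pqFact p q n := by
  unfold pqFact
  exact Finset.prod_pos fun i _ => pqInt_pos hq hqp i

lemma pqFact_succ (n : ℕ) : pqFact p q (n + 1) = pqFact p q n * pqInt p q (n + 1) :=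
  Finset.prod_range_succ _ _

lemma pqInt_key (hqp : q < p) (a b : ℕ) :
    pqInt p q (a + b + 2) = p ^ (a + 1) * pqInt p q (b + 1) + q ^ (b + 1) * pqInt p q (a + 1) := by
  unfold pqInt
  have : p - q ≠ 0 := sub_ne_zero.2 hqp.ne'
  field_simp
  ring

lemma tri_succ (b : ℕ) : (b + 1) * b / 2 = b * (b - 1) / 2 + b := by
  cases b with
  | zero => rfl
  | succ m =>
    rw [Nat.succ_sub_one, show (m + 1 + 1) * (m + 1) = (m + 1) * m + 2 * (m + 1) by ring,
      Nat.add_mul_div_left _ _ (by norm_num : (0:ℕ) < 2)]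

lemma pqFact_zero : pqFact p q 0 = 1 := by simp [pqFact]

lemma pqChoose_zero (hq : 0 < q) (hqp : q < p) (n : ℕ) : pqChoose p q n 0 = 1 := by
  unfold pqChoose
  rw [Nat.sub_zero, pqFact_zero, one_mul, div_self (pqFact_pos hq hqp n).ne']

lemma pqChoose_self (hq : 0 < q) (hqp : q < p) (n : ℕ) : pqChoose p q n n = 1 := by
  unfold pqChoose
  rw [Nat.sub_self, pqFact_zero, mul_one, div_self (pqFact_pos hq hqp n).ne']

lemma pqChoose_rec (hq : 0 < q) (hqp : q < p) (a b : ℕ) :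
    pqChoose p q (a + b + 2) (a + 1) =
      p ^ (a + 1) * pqChoose p q (a + b + 1) (a + 1) +
        q ^ (b + 1) * pqChoose p q (a + b + 1) a := by
  unfold pqChoose
  rw [show a + b + 2 - (a + 1) = b + 1 by omega, show a + b + 1 - (a + 1) = b by omega,
    show a + b + 1 - a = b + 1 by omega, show a + b + 2 = (a + b + 1) + 1 by omega,
    pqFact_succ, show (a:ℕ) + 1 = a + 1 by rfl]
  rw [pqInt_key hqp a b, pqFact_succ a, pqFact_succ b]
  have hFa := (pqFact_pos hq hqp a).ne'
  have hFb := (pqFact_pos hq hqp b).ne'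
  have hFn := (pqFact_pos hq hqp (a + b + 1)).ne'
  have hIa := (pqInt_pos hq hqp a).ne'
  have hIb := (pqInt_pos hq hqp b).ne'
  field_simp

lemma step (hq : 0 < q) (hqp : q < p) (a b : ℕ) :
    pqChoose p q (a + b + 2) (a + 1) * p ^ ((b + 1) * b / 2) * q ^ ((a + 1) * a / 2) =
      p ^ (a + b + 1) * (pqChoose p q (a + b + 1) (a + 1) * p ^ (b * (b - 1) / 2) *
          q ^ ((a + 1) * a / 2)) +
        q ^ (a + b + 1) * (pqChoose p q (a + b + 1) a * p ^ ((b + 1) * b / 2) *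
          q ^ (a * (a - 1) / 2)) := by
  rw [pqChoose_rec hq hqp a b, tri_succ a, tri_succ b]
  rw [pow_add p (b * (b - 1) / 2) b, pow_add q (a * (a - 1) / 2) a]
  ring

theorem stmt6 (p q : ℝ) (hq : 0 < q) (hqp : q < p) (hp : p ≤ 1) (n : ℕ) (x y : ℝ) :
    ∏ s ∈ Finset.range n, (p ^ s * x + q ^ s * y) =
      ∑ k ∈ Finset.range (n + 1),
        pqChoose p q n k * p ^ ((n - k) * (n - k - 1) / 2) * q ^ (k * (k - 1) / 2) *
          x ^ (n - k) * y ^ k := by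
  induction n with
  | zero => simp [pqChoose, pqFact]
  | succ n ih =>
    rw [Finset.prod_range_succ, ih, mul_add, Finset.sum_mul, Finset.sum_mul]
    conv_lhs => rw [Finset.sum_range_succ']
    conv_lhs => rw [Finset.sum_range_succ]
    conv_rhs => rw [Finset.sum_range_succ, Finset.sum_range_succ']
    have e2 : ∀ k ∈ Finset.range n,
        (pqChoose p q n (k + 1) * p ^ ((n - (k + 1)) * (n - (k + 1) - 1) / 2) *
            q ^ ((k + 1) * (k + 1 - 1) / 2) * x ^ (n - (k + 1)) * y ^ (k + 1)) * (p ^ n * x) +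
          (pqChoose p q n k * p ^ ((n - k) * (n - k - 1) / 2) * q ^ (k * (k - 1) / 2) *
            x ^ (n - k) * y ^ k) * (q ^ n * y) =
          pqChoose p q (n + 1) (k + 1) *
            p ^ ((n + 1 - (k + 1)) * (n + 1 - (k + 1) - 1) / 2) *
            q ^ ((k + 1) * (k + 1 - 1) / 2) * x ^ (n + 1 - (k + 1)) * y ^ (k + 1) := by
      intro k hk
      rw [Finset.mem_range] at hk
      obtain ⟨b, rfl⟩ : ∃ b, n = k + b + 1 := ⟨n - k - 1, by omega⟩
      rw [show k + b + 1 - (k + 1) = b by omega,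
        show k + 1 - 1 = k by omega,
        show k + b + 1 - k - 1 = b by omega, show k + b + 1 - k = b + 1 by omega,
        show k + b + 1 + 1 - (k + 1) - 1 = b by omega,
        show k + b + 1 + 1 - (k + 1) = b + 1 by omega,
        show k + b + 1 + 1 = k + b + 2 by omega]
      rw [step hq hqp k b]
      ring
    have hsum := Finset.sum_congr rfl e2
    rw [Finset.sum_add_distrib] at hsum
    have e0 : (pqChoose p q n 0 * p ^ ((n - 0) * (n - 0 - 1) / 2) * q ^ (0 * (0 - 1) / 2) *
          x ^ (n - 0) * y ^ 0) * (p ^ n * x) =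
        pqChoose p q (n + 1) 0 * p ^ ((n + 1 - 0) * (n + 1 - 0 - 1) / 2) * q ^ (0 * (0 - 1) / 2) *
          x ^ (n + 1 - 0) * y ^ 0 := by
      rw [pqChoose_zero hq hqp, pqChoose_zero hq hqp]
      simp only [Nat.sub_zero, Nat.add_sub_cancel, pow_zero]
      rw [tri_succ n, pow_add, pow_succ]
      ring
    have e1 : (pqChoose p q n n * p ^ ((n - n) * (n - n - 1) / 2) * q ^ (n * (n - 1) / 2) *
          x ^ (n - n) * y ^ n) * (q ^ n * y) =
        pqChoose p q (n + 1) (n + 1) * p ^ ((n + 1 - (n + 1)) * (n + 1 - (n + 1) - 1) / 2) *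
          q ^ ((n + 1) * (n + 1 - 1) / 2) * x ^ (n + 1 - (n + 1)) * y ^ (n + 1) := by
      rw [pqChoose_self hq hqp, pqChoose_self hq hqp]
      simp only [Nat.sub_self, Nat.add_sub_cancel, Nat.zero_sub, Nat.zero_mul, zero_mul,
        Nat.zero_div, pow_zero]
      rw [tri_succ n, pow_add, pow_succ]
      ring
    linarith [hsum, e0, e1]
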